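/- Let n ≥ 3 and u ∈ BD_dev(ℝⁿ). Then for every x ∈ ℝⁿ, every τ > 0 and every 0 < ϱ < τ: (1) A_{ϱ,x}[u] = −(1/ω_n)·∫_{B_τ(x)\B_ϱ(x)} (Γ(y−x)/|y−x|ⁿ) dℰ_d u(y) + A_{τ,x}[u], where Γ(z)M := (Mz⊗z − z⊗Mz)/|z|²; (2) γ_{ϱ,x}[u]·Id = −(1/((n−1)ω_n))·∫_{B_τ(x)\B_ϱ(x)} (Ξ(y−x)/|y−x|ⁿ) dℰ_d u(y) + γ_{τ,x}[u]·Id, where Ξ(z)M := ((zᵀMz)/|z|² − tr(M)/n)·Id; (3) s_{ϱ,x}[u] = −(1/((n−1)ω_n))·∫_{B_τ(x)\B_ϱ(x)} (Υ(y−x)/|y−x|^{n+1}) dℰ_d u(y) + s_{τ,x}[u], where Υ(z)M := 2Mz/|z| − (n+2)·((zᵀMz)/|z|²)·z/|z| + tr(M)·z/|z|. Here the integrals against the matrix-valued measure ℰ_d u mean integrating the indicated zero-homogeneous tensor applied to the polar density dℰ_d u/d|ℰ_d u| against |ℰ_d u|. -/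

import Mathlib

open MeasureTheory Filter Topology Metric

/-- Partial derivative `∂_j f` of a scalar function on Euclidean space. -/
noncomputable def pdsE {n : ℕ} (j : Fin n) (f : EuclideanSpace ℝ (Fin n) → ℝ) :
    EuclideanSpace ℝ (Fin n) → ℝ :=
  fun x => fderiv ℝ f x (EuclideanSpace.single j 1)

/-- `a ⊗_{ℰ_d} b := a⊙b − ((a·b)/n)·Id` (on coordinates). -/
noncomputable def edT (n : ℕ) (a b : Fin n → ℝ) (i j : Fin n) : ℝ :=
  (a i * b j + a j * b i) / 2
    - ((∑ l, a l * b l) / (n : ℝ)) * (if i = j then 1 else 0)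

/-- The `(n−1)`-dimensional Hausdorff measure on `ℝⁿ`. -/
noncomputable def Hm (n : ℕ) : Measure (EuclideanSpace ℝ (Fin n)) :=
  μH[(n : ℝ) - 1]

/-- `ω_n`, the volume of the unit ball of `ℝⁿ`. -/
noncomputable def omegaN (n : ℕ) : ℝ :=
  (volume (ball (0 : EuclideanSpace ℝ (Fin n)) 1)).toReal

/-- `s_{ρ,x}[T] = (1/((n−1)ω_n ρ^{n+1})) ∫_{∂B_ρ(x)} [T − n(ν·T)ν] dH^{n−1}`. -/
noncomputable def sBall {n : ℕ} (x : EuclideanSpace ℝ (Fin n)) (ρ : ℝ)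
    (T : EuclideanSpace ℝ (Fin n) → EuclideanSpace ℝ (Fin n)) (k : Fin n) : ℝ :=
  (1 / (((n : ℝ) - 1) * omegaN n * ρ ^ (n + 1))) *
    ∫ y in sphere x ρ,
      (T y k - (n : ℝ) * (∑ i, (y i - x i) / ρ * T y i) * ((y k - x k) / ρ)) ∂(Hm n)

/-- `A_{ρ,x}[T] = (1/(2ω_n ρⁿ)) ∫_{∂B_ρ(x)} [T⊗ν − ν⊗T] dH^{n−1}`. -/
noncomputable def ABall {n : ℕ} (x : EuclideanSpace ℝ (Fin n)) (ρ : ℝ)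
    (T : EuclideanSpace ℝ (Fin n) → EuclideanSpace ℝ (Fin n)) (i j : Fin n) : ℝ :=
  (1 / (2 * omegaN n * ρ ^ n)) *
    ∫ y in sphere x ρ,
      (T y i * ((y j - x j) / ρ) - ((y i - x i) / ρ) * T y j) ∂(Hm n)

/-- `γ_{ρ,x}[T] = (1/(nω_n ρⁿ)) ∫_{∂B_ρ(x)} T·ν dH^{n−1}`. -/
noncomputable def gBall {n : ℕ} (x : EuclideanSpace ℝ (Fin n)) (ρ : ℝ)
    (T : EuclideanSpace ℝ (Fin n) → EuclideanSpace ℝ (Fin n)) : ℝ :=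
  (1 / ((n : ℝ) * omegaN n * ρ ^ n)) *
    ∫ y in sphere x ρ, (∑ i, T y i * ((y i - x i) / ρ)) ∂(Hm n)

/-- `T` is an (interior) boundary trace of `u` on `∂B_ρ(x)`, i.e. the Gauss–Green
formula holds on `B_ρ(x)` with boundary term written through `T`. -/
noncomputable def IsSphereTrace {n : ℕ}
    (u : EuclideanSpace ℝ (Fin n) → EuclideanSpace ℝ (Fin n))
    (ν : Measure (EuclideanSpace ℝ (Fin n)))
    (σ : EuclideanSpace ℝ (Fin n) → Fin n → Fin n → ℝ)
    (x : EuclideanSpace ℝ (Fin n)) (ρ : ℝ)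
    (T : EuclideanSpace ℝ (Fin n) → EuclideanSpace ℝ (Fin n)) : Prop :=
  IntegrableOn T (sphere x ρ) (Hm n) ∧
  ∀ F : EuclideanSpace ℝ (Fin n) → Fin n → Fin n → ℝ,
    ContDiff ℝ (⊤ : ℕ∞) F → (∀ z, (∀ i j, F z i j = F z j i) ∧ (∑ i, F z i i = 0)) →
    ∫ z in ball x ρ, (∑ i, ∑ j, F z i j * σ z i j) ∂ν
      = -(∫ z in ball x ρ, (∑ i, u z i * (∑ j, pdsE j (fun y => F y i j) z)) ∂volume)
        + ∫ y in sphere x ρ,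
            (∑ i, ∑ j, edT n (fun l => (y l - x l) / ρ) (fun l => T y l) i j * F y i j)
              ∂(Hm n)

noncomputable section
namespace NLR

variable {n : ℕ}

abbrev E (n : ℕ) := EuclideanSpace ℝ (Fin n)

def qF (x : E n) (z : E n) : ℝ := ∑ l, (z l - x l) ^ 2

lemma qF_nonneg (x z : E n) : 0 ≤ qF x z := Finset.sum_nonneg fun _ _ => sq_nonneg _

lemma sq_sqrt_qF (x z : E n) : Real.sqrt (qF x z) ^ 2 = qF x z := Real.sq_sqrt (qF_nonneg x z)

def prj (l : Fin n) : E n →L[ℝ] ℝ := EuclideanSpace.proj (𝕜 := ℝ) l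

lemma prj_single (a j : Fin n) : prj a (EuclideanSpace.single j 1) = if a = j then 1 else 0 := by
  simp [prj, EuclideanSpace.proj, EuclideanSpace.single_apply]

lemma hasFDerivAt_wv (x : E n) (l : Fin n) (z : E n) :
    HasFDerivAt (fun z : E n => z l - x l) (prj l) z :=
  (prj l).hasFDerivAt.sub_const (x l)

def DQ (x z : E n) : E n →L[ℝ] ℝ := ∑ l, (2 * (z l - x l)) • prj l

lemma hasFDerivAt_qF (x : E n) (z : E n) : HasFDerivAt (qF x) (DQ x z) z := by
  have h : ∀ l ∈ Finset.univ, HasFDerivAt (fun z : E n => (z l - x l) ^ 2)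
      ((2 * (z l - x l)) • prj l) z := by
    intro l _
    have h0 := (hasFDerivAt_wv x l z).fun_mul (hasFDerivAt_wv x l z)
    have : (2 * (z l - x l)) • prj l
        = (z l - x l) • prj l + (z l - x l) • prj l := by rw [two_mul, add_smul]
    rw [this]
    simpa [pow_two] using h0
  exact HasFDerivAt.fun_sum h

lemma DQ_single (x z : E n) (j : Fin n) :
    DQ x z (EuclideanSpace.single j 1) = 2 * (z j - x j) := by
  simp [DQ, ContinuousLinearMap.sum_apply, prj_single, Finset.sum_ite_eq, mul_ite]

lemma hasDerivAt_invSqrtPow (m : ℕ) {t : ℝ} (ht : 0 < t) :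
    HasDerivAt (fun t : ℝ => (Real.sqrt t ^ m)⁻¹)
      (-(m : ℝ) / 2 * (Real.sqrt t ^ (m + 2))⁻¹) t := by
  have hs : 0 < Real.sqrt t := Real.sqrt_pos.2 ht
  have h1 : HasDerivAt (fun t : ℝ => Real.sqrt t ^ m)
      ((m : ℝ) * Real.sqrt t ^ (m - 1) * (1 / (2 * Real.sqrt t))) t :=
    (Real.hasDerivAt_sqrt ht.ne').pow m
  have h2 := h1.fun_inv (pow_ne_zero m hs.ne')
  refine h2.congr_deriv ?_
  cases m with
  | zero => simp
  | succ k =>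
    simp only [Nat.succ_sub_one]
    field_simp
    ring

def G (x : E n) (m : ℕ) (z : E n) : ℝ := (Real.sqrt (qF x z) ^ m)⁻¹

lemma hasFDerivAt_G (x : E n) (m : ℕ) {z : E n} (hq : 0 < qF x z) :
    HasFDerivAt (G x m) ((-(m : ℝ) / 2 * G x (m + 2) z) • DQ x z) z :=
  (hasDerivAt_invSqrtPow m hq).comp_hasFDerivAt z (hasFDerivAt_qF x z)

lemma hasFDerivAt_atom (x : E n) {P : E n → ℝ} {DP : E n →L[ℝ] ℝ} {z : E n}
    (hP : HasFDerivAt P DP z) (m : ℕ) (hq : 0 < qF x z) :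
    HasFDerivAt (fun y => P y * G x m y)
      (P z • ((-(m : ℝ) / 2 * G x (m + 2) z) • DQ x z) + G x m z • DP) z :=
  hP.mul (hasFDerivAt_G x m hq)

lemma qG (x : E n) (m : ℕ) {z : E n} (hq : 0 < qF x z) :
    qF x z * G x (m + 2) z = G x m z := by
  have hs : 0 < Real.sqrt (qF x z) := Real.sqrt_pos.2 hq
  rw [G, G, pow_add, ← sq_sqrt_qF x z]
  field_simp
  rw [Real.sqrt_sq hs.le]


lemma sum_delta_mul (i : Fin n) (g : Fin n → ℝ) :
    ∑ c, (if i = c then (1:ℝ) else 0) * g c = g i := by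
  simp [ite_mul, Finset.sum_ite_eq]

/-- Γ kernel (with indices i j fixed); entry (a,c). -/
def KG (x : E n) (i j : Fin n) (z : E n) (a c : Fin n) : ℝ :=
  (2⁻¹ * ((if i = a then (1:ℝ) else 0) * ((z c - x c) * (z j - x j))
   + (if i = c then (1:ℝ) else 0) * ((z a - x a) * (z j - x j))
   - (if j = a then (1:ℝ) else 0) * ((z i - x i) * (z c - x c))
   - (if j = c then (1:ℝ) else 0) * ((z i - x i) * (z a - x a)))) * G x (n + 2) z

lemma pdsE_KG (x : E n) (i j : Fin n) {z : E n} (hq : 0 < qF x z) (a c : Fin n) :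
    pdsE c (fun y => KG x i j y a c) z =
      (2⁻¹ * ((if i = a then (1:ℝ) else 0) * ((z c - x c) * (z j - x j))
       + (if i = c then (1:ℝ) else 0) * ((z a - x a) * (z j - x j))
       - (if j = a then (1:ℝ) else 0) * ((z i - x i) * (z c - x c))
       - (if j = c then (1:ℝ) else 0) * ((z i - x i) * (z a - x a))))
        * (-((n:ℝ) + 2) / 2 * G x (n + 4) z) * (2 * (z c - x c))
      + G x (n + 2) z * (2⁻¹ *
        ((if i = a then (1:ℝ) else 0) * ((z c - x c) * (if j = c then (1:ℝ) else 0) + (z j - x j))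
         + (if i = c then (1:ℝ) else 0) * ((z a - x a) * (if j = c then (1:ℝ) else 0)
              + (z j - x j) * (if a = c then (1:ℝ) else 0))
         - (if j = a then (1:ℝ) else 0) * ((z i - x i) + (z c - x c) * (if i = c then (1:ℝ) else 0))
         - (if j = c then (1:ℝ) else 0) * ((z i - x i) * (if a = c then (1:ℝ) else 0)
              + (z a - x a) * (if i = c then (1:ℝ) else 0)))) := by
  have hP : HasFDerivAt
      (fun y : E n => 2⁻¹ * ((if i = a then (1:ℝ) else 0) * ((y c - x c) * (y j - x j))
       + (if i = c then (1:ℝ) else 0) * ((y a - x a) * (y j - x j))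
       - (if j = a then (1:ℝ) else 0) * ((y i - x i) * (y c - x c))
       - (if j = c then (1:ℝ) else 0) * ((y i - x i) * (y a - x a))))
      ((2⁻¹:ℝ) • (((if i = a then (1:ℝ) else 0) • ((z c - x c) • prj j + (z j - x j) • prj c)
       + (if i = c then (1:ℝ) else 0) • ((z a - x a) • prj j + (z j - x j) • prj a))
       - (if j = a then (1:ℝ) else 0) • ((z i - x i) • prj c + (z c - x c) • prj i)
       - (if j = c then (1:ℝ) else 0) • ((z i - x i) • prj a + (z a - x a) • prj i))) z := by
    apply HasFDerivAt.const_mul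
    exact ((((((hasFDerivAt_wv x c z).mul (hasFDerivAt_wv x j z)).const_mul _).add
      (((hasFDerivAt_wv x a z).mul (hasFDerivAt_wv x j z)).const_mul _)).sub
      (((hasFDerivAt_wv x i z).mul (hasFDerivAt_wv x c z)).const_mul _)).sub
      (((hasFDerivAt_wv x i z).mul (hasFDerivAt_wv x a z)).const_mul _))
  have hD := hasFDerivAt_atom x hP (n + 2) hq
  rw [pdsE]
  simp only [KG]
  rw [hD.fderiv]
  simp only [ContinuousLinearMap.add_apply, ContinuousLinearMap.sub_apply,
    ContinuousLinearMap.smul_apply, smul_eq_mul, prj_single, DQ_single]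
  push_cast
  ring

lemma divKG (x : E n) (i j : Fin n) {z : E n} (hq : 0 < qF x z) (a : Fin n) :
    ∑ c, pdsE c (fun y => KG x i j y a c) z = 0 := by
  have hq4 : qF x z * G x (n + 4) z = G x (n + 2) z := qG x (n + 2) hq
  set G2 := G x (n + 2) z with hG2
  set G4 := G x (n + 4) z with hG4
  set dia : ℝ := (if i = a then (1:ℝ) else 0) with hdia
  set dja : ℝ := (if j = a then (1:ℝ) else 0) with hdja
  -- canonical decomposition coefficients
  set A0 : ℝ := -(((n:ℝ) + 2) / 2) * G4 * (dia * (z j - x j) - dja * (z i - x i)) with hA0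
  set B : Fin n → ℝ := fun c =>
    -(((n:ℝ) + 2) / 2) * G4 * ((z a - x a) * (z j - x j) * (z c - x c))
    + (G2 / 2) * ((if j = c then (1:ℝ) else 0) * (z a - x a)
        + (if a = c then (1:ℝ) else 0) * (z j - x j) - dja * (z c - x c)) with hB
  set C : Fin n → ℝ := fun c =>
    (((n:ℝ) + 2) / 2) * G4 * ((z i - x i) * (z a - x a) * (z c - x c))
    + (G2 / 2) * (dia * (z c - x c) - (if a = c then (1:ℝ) else 0) * (z i - x i)
        - (if i = c then (1:ℝ) else 0) * (z a - x a)) with hC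
  set Ec : ℝ := (G2 / 2) * (dia * (z j - x j) - dja * (z i - x i)) with hEc
  have key : ∀ c : Fin n, pdsE c (fun y => KG x i j y a c) z
      = A0 * (z c - x c) ^ 2 + (if i = c then (1:ℝ) else 0) * B c
        + (if j = c then (1:ℝ) else 0) * C c + Ec := by
    intro c
    rw [pdsE_KG x i j hq a c]
    simp only [hA0, hB, hC, hEc, hdia, hdja]
    ring
  calc ∑ c, pdsE c (fun y => KG x i j y a c) z
      = ∑ c : Fin n, (A0 * (z c - x c) ^ 2 + (if i = c then (1:ℝ) else 0) * B c
        + (if j = c then (1:ℝ) else 0) * C c + Ec) := Finset.sum_congr rfl fun c _ => key c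
    _ = A0 * qF x z + B i + C j + (n : ℝ) * Ec := by
        rw [Finset.sum_add_distrib, Finset.sum_add_distrib, Finset.sum_add_distrib,
          ← Finset.mul_sum, sum_delta_mul, sum_delta_mul, Finset.sum_const,
          Finset.card_univ, Fintype.card_fin, nsmul_eq_mul, qF]
    _ = 0 := by
        simp only [hA0, hB, hC, hEc, hdia, hdja]
        have e1 : (if j = i then (1:ℝ) else 0) = (if i = j then 1 else 0) := by
          simp only [eq_comm]
        have e2 : (if a = i then (1:ℝ) else 0) = (if i = a then 1 else 0) := by
          simp only [eq_comm]
        have e3 : (if a = j then (1:ℝ) else 0) = (if j = a then 1 else 0) := by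
          simp only [eq_comm]
        rw [e1, e2, e3]
        linear_combination (-(((n:ℝ) + 2) / 2) * ((if i = a then (1:ℝ) else 0) * (z j - x j)
          - (if j = a then (1:ℝ) else 0) * (z i - x i))) * hq4


/-- Ξ kernel entry (a,c). -/
def KX (x : E n) (z : E n) (a c : Fin n) : ℝ :=
  (z a - x a) * (z c - x c) * G x (n + 2) z
    - ((if a = c then (1:ℝ) else 0) * (n:ℝ)⁻¹) * G x n z

lemma pdsE_KX (x : E n) {z : E n} (hq : 0 < qF x z) (a c : Fin n) :
    pdsE c (fun y => KX x y a c) z =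
      (z a - x a) * (z c - x c) * (-((n:ℝ) + 2) / 2 * G x (n + 4) z) * (2 * (z c - x c))
      + G x (n + 2) z * ((z a - x a) + (z c - x c) * (if a = c then (1:ℝ) else 0))
      - (if a = c then (1:ℝ) else 0) * (n:ℝ)⁻¹ * (-(n:ℝ) / 2 * G x (n + 2) z)
          * (2 * (z c - x c)) := by
  have h1 : HasFDerivAt (fun y : E n => (y a - x a) * (y c - x c))
      ((z a - x a) • prj c + (z c - x c) • prj a) z :=
    (hasFDerivAt_wv x a z).mul (hasFDerivAt_wv x c z)
  have hA := hasFDerivAt_atom x h1 (n + 2) hq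
  have h2 : HasFDerivAt (fun _ : E n => (if a = c then (1:ℝ) else 0) * (n:ℝ)⁻¹)
      (0 : E n →L[ℝ] ℝ) z := hasFDerivAt_const _ _
  have hB := hasFDerivAt_atom x h2 n hq
  have hD := hA.fun_sub hB
  rw [pdsE]
  simp only [KX]
  rw [hD.fderiv]
  simp only [ContinuousLinearMap.add_apply, ContinuousLinearMap.sub_apply,
    ContinuousLinearMap.smul_apply, ContinuousLinearMap.zero_apply, smul_eq_mul,
    prj_single, DQ_single]
  push_cast
  ring

lemma divKX (x : E n) (hn : (n:ℝ) ≠ 0) {z : E n} (hq : 0 < qF x z) (a : Fin n) :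
    ∑ c, pdsE c (fun y => KX x y a c) z = 0 := by
  have hq4 : qF x z * G x (n + 4) z = G x (n + 2) z := qG x (n + 2) hq
  set G2 := G x (n + 2) z with hG2
  set G4 := G x (n + 4) z with hG4
  have key : ∀ c : Fin n, pdsE c (fun y => KX x y a c) z
      = (-((n:ℝ) + 2) * G4 * (z a - x a)) * (z c - x c) ^ 2
        + (if a = c then (1:ℝ) else 0) * (2 * G2 * (z c - x c)) + G2 * (z a - x a) := by
    intro c
    rw [pdsE_KX x hq a c]
    have hninv : (n:ℝ)⁻¹ * (n:ℝ) = 1 := inv_mul_cancel₀ hn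
    linear_combination ((if a = c then (1:ℝ) else 0) * G2 * (z c - x c)) * hninv
  calc ∑ c, pdsE c (fun y => KX x y a c) z
      = ∑ c : Fin n, ((-((n:ℝ) + 2) * G4 * (z a - x a)) * (z c - x c) ^ 2
        + (if a = c then (1:ℝ) else 0) * (2 * G2 * (z c - x c)) + G2 * (z a - x a)) :=
        Finset.sum_congr rfl fun c _ => key c
    _ = (-((n:ℝ) + 2) * G4 * (z a - x a)) * qF x z
        + 2 * G2 * (z a - x a) + (n : ℝ) * (G2 * (z a - x a)) := by
        rw [Finset.sum_add_distrib, Finset.sum_add_distrib, ← Finset.mul_sum,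
          sum_delta_mul, Finset.sum_const, Finset.card_univ, Fintype.card_fin,
          nsmul_eq_mul, qF]
    _ = 0 := by linear_combination (-((n:ℝ) + 2) * (z a - x a)) * hq4

/-- Υ kernel entry (a,c), index k fixed. -/
def KU (x : E n) (k : Fin n) (z : E n) (a c : Fin n) : ℝ :=
  ((if k = a then (1:ℝ) else 0) * (z c - x c) + (if k = c then (1:ℝ) else 0) * (z a - x a)
    + (if a = c then (1:ℝ) else 0) * (z k - x k)) * G x (n + 2) z
  - (((n:ℝ) + 2) * ((z k - x k) * (z a - x a) * (z c - x c))) * G x (n + 4) z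

lemma pdsE_KU (x : E n) (k : Fin n) {z : E n} (hq : 0 < qF x z) (a c : Fin n) :
    pdsE c (fun y => KU x k y a c) z =
      ((if k = a then (1:ℝ) else 0) * (z c - x c) + (if k = c then (1:ℝ) else 0) * (z a - x a)
        + (if a = c then (1:ℝ) else 0) * (z k - x k))
          * (-((n:ℝ) + 2) / 2 * G x (n + 4) z) * (2 * (z c - x c))
      + G x (n + 2) z * ((if k = a then (1:ℝ) else 0)
          + (if k = c then (1:ℝ) else 0) * (if a = c then (1:ℝ) else 0)
          + (if a = c then (1:ℝ) else 0) * (if k = c then (1:ℝ) else 0))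
      - (((n:ℝ) + 2) * ((z k - x k) * (z a - x a) * (z c - x c)))
          * (-((n:ℝ) + 4) / 2 * G x (n + 6) z) * (2 * (z c - x c))
      - G x (n + 4) z * (((n:ℝ) + 2) * ((z k - x k) * (z a - x a)
          + (z c - x c) * ((z k - x k) * (if a = c then (1:ℝ) else 0)
              + (z a - x a) * (if k = c then (1:ℝ) else 0)))) := by
  have h1 : HasFDerivAt (fun y : E n => (if k = a then (1:ℝ) else 0) * (y c - x c)
      + (if k = c then (1:ℝ) else 0) * (y a - x a)
      + (if a = c then (1:ℝ) else 0) * (y k - x k))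
      ((if k = a then (1:ℝ) else 0) • prj c + (if k = c then (1:ℝ) else 0) • prj a
        + (if a = c then (1:ℝ) else 0) • prj k) z :=
    (((hasFDerivAt_wv x c z).const_mul _).add ((hasFDerivAt_wv x a z).const_mul _)).add
      ((hasFDerivAt_wv x k z).const_mul _)
  have hA := hasFDerivAt_atom x h1 (n + 2) hq
  have h2 : HasFDerivAt
      (fun y : E n => ((n:ℝ) + 2) * ((y k - x k) * (y a - x a) * (y c - x c)))
      ((((n:ℝ) + 2)) • (((z k - x k) * (z a - x a)) • prj c
        + (z c - x c) • ((z k - x k) • prj a + (z a - x a) • prj k))) z :=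
    (((hasFDerivAt_wv x k z).mul (hasFDerivAt_wv x a z)).mul
      (hasFDerivAt_wv x c z)).const_mul _
  have hB := hasFDerivAt_atom x h2 (n + 4) hq
  have hD := hA.fun_sub hB
  rw [pdsE]
  simp only [KU]
  rw [hD.fderiv]
  simp only [ContinuousLinearMap.add_apply, ContinuousLinearMap.sub_apply,
    ContinuousLinearMap.smul_apply, smul_eq_mul, prj_single, DQ_single]
  push_cast
  ring

lemma divKU (x : E n) (k : Fin n) {z : E n} (hq : 0 < qF x z) (a : Fin n) :
    ∑ c, pdsE c (fun y => KU x k y a c) z = 0 := by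
  have hq4 : qF x z * G x (n + 4) z = G x (n + 2) z := qG x (n + 2) hq
  have hq6 : qF x z * G x (n + 6) z = G x (n + 4) z := by
    have h := qG x (n + 4) hq
    have e : n + 4 + 2 = n + 6 := by omega
    rwa [e] at h
  set G2 := G x (n + 2) z with hG2
  set G4 := G x (n + 4) z with hG4
  set G6 := G x (n + 6) z with hG6
  set dka : ℝ := (if k = a then (1:ℝ) else 0) with hdka
  have key : ∀ c : Fin n, pdsE c (fun y => KU x k y a c) z
      = (-((n:ℝ) + 2) * G4 * dka + ((n:ℝ) + 2) * (((n:ℝ) + 4)) * G6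
            * ((z k - x k) * (z a - x a))) * (z c - x c) ^ 2
        + (if k = c then (1:ℝ) else 0) * (-2 * ((n:ℝ) + 2) * G4 * (z a - x a) * (z c - x c)
            + 2 * G2 * (if a = c then (1:ℝ) else 0))
        + (if a = c then (1:ℝ) else 0) * (-2 * ((n:ℝ) + 2) * G4 * (z k - x k) * (z c - x c))
        + (G2 * dka - ((n:ℝ) + 2) * G4 * ((z k - x k) * (z a - x a))) := by
    intro c
    rw [pdsE_KU x k hq a c]
    simp only [hdka]
    ring
  calc ∑ c, pdsE c (fun y => KU x k y a c) z
      = ∑ c : Fin n, ((-((n:ℝ) + 2) * G4 * dka + ((n:ℝ) + 2) * (((n:ℝ) + 4)) * G6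
            * ((z k - x k) * (z a - x a))) * (z c - x c) ^ 2
        + (if k = c then (1:ℝ) else 0) * (-2 * ((n:ℝ) + 2) * G4 * (z a - x a) * (z c - x c)
            + 2 * G2 * (if a = c then (1:ℝ) else 0))
        + (if a = c then (1:ℝ) else 0) * (-2 * ((n:ℝ) + 2) * G4 * (z k - x k) * (z c - x c))
        + (G2 * dka - ((n:ℝ) + 2) * G4 * ((z k - x k) * (z a - x a)))) :=
        Finset.sum_congr rfl fun c _ => key c
    _ = (-((n:ℝ) + 2) * G4 * dka + ((n:ℝ) + 2) * (((n:ℝ) + 4)) * G6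
            * ((z k - x k) * (z a - x a))) * qF x z
        + (-2 * ((n:ℝ) + 2) * G4 * (z a - x a) * (z k - x k)
            + 2 * G2 * (if a = k then (1:ℝ) else 0))
        + (-2 * ((n:ℝ) + 2) * G4 * (z k - x k) * (z a - x a))
        + (n : ℝ) * (G2 * dka - ((n:ℝ) + 2) * G4 * ((z k - x k) * (z a - x a))) := by
        rw [Finset.sum_add_distrib, Finset.sum_add_distrib, Finset.sum_add_distrib,
          ← Finset.mul_sum, sum_delta_mul, sum_delta_mul, Finset.sum_const,
          Finset.card_univ, Fintype.card_fin, nsmul_eq_mul, qF]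
    _ = 0 := by
        have e2 : (if a = k then (1:ℝ) else 0) = dka := by
          rw [hdka]; simp only [eq_comm]
        rw [e2, hdka]
        linear_combination (-((n:ℝ) + 2) * (if k = a then (1:ℝ) else 0)) * hq4
          + (((n:ℝ) + 2) * (((n:ℝ) + 4)) * ((z k - x k) * (z a - x a))) * hq6


/-! ### cutoff and smoothness -/

lemma contDiff_qF (x : E n) : ContDiff ℝ (⊤ : ℕ∞) (qF x) := by
  apply ContDiff.sum
  intro l _
  exact (((EuclideanSpace.proj (𝕜 := ℝ) l).contDiff).sub contDiff_const).pow 2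

lemma continuous_qF (x : E n) : Continuous (qF x) := (contDiff_qF x).continuous

lemma contDiffAt_G (x : E n) (m : ℕ) {z : E n} (hq : 0 < qF x z) :
    ContDiffAt ℝ (⊤ : ℕ∞) (G x m) z := by
  have h1 : ContDiffAt ℝ (⊤ : ℕ∞) (fun y => Real.sqrt (qF x y)) z :=
    (Real.contDiffAt_sqrt hq.ne').comp z (contDiff_qF x).contDiffAt
  have h2 : ContDiffAt ℝ (⊤ : ℕ∞) (fun y => Real.sqrt (qF x y) ^ m) z := h1.pow m
  exact h2.inv (pow_ne_zero m (Real.sqrt_pos.2 hq).ne')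

/-- smooth cutoff: `0` for `t ≤ ρ²/4`, `1` for `t ≥ ρ²/2` -/
def cut (ρ t : ℝ) : ℝ := Real.smoothTransition ((t - ρ ^ 2 / 4) / (ρ ^ 2 / 4))

lemma cut_eq_one {ρ t : ℝ} (hρ : 0 < ρ) (ht : ρ ^ 2 / 2 ≤ t) : cut ρ t = 1 := by
  apply Real.smoothTransition.one_of_one_le
  rw [le_div_iff₀ (by positivity)]
  nlinarith

lemma cut_eq_zero {ρ t : ℝ} (ht : t ≤ ρ ^ 2 / 4) : cut ρ t = 0 := by
  apply Real.smoothTransition.zero_of_nonpos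
  rcases eq_or_ne ρ 0 with h | h
  · simp [h]
  · apply div_nonpos_of_nonpos_of_nonneg (by linarith) (by positivity)

lemma contDiff_cutq (x : E n) (ρ : ℝ) :
    ContDiff ℝ (⊤ : ℕ∞) (fun z => cut ρ (qF x z)) := by
  exact Real.smoothTransition.contDiff.comp
    (((contDiff_qF x).sub contDiff_const).div_const _)

/-- generic smoothness: cutoff times kernel entry, where the entry is smooth
wherever `qF > 0` -/
lemma contDiff_cut_mul (x : E n) {ρ : ℝ} (hρ : 0 < ρ) (K : E n → ℝ)
    (hK : ∀ z, 0 < qF x z → ContDiffAt ℝ (⊤ : ℕ∞) K z) :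
    ContDiff ℝ (⊤ : ℕ∞) (fun z => cut ρ (qF x z) * K z) := by
  rw [contDiff_iff_contDiffAt]
  intro z
  rcases lt_or_ge (qF x z) (ρ ^ 2 / 4) with h | h
  · have hev : (fun z => cut ρ (qF x z) * K z) =ᶠ[𝓝 z] (fun _ => 0) := by
      have hop : IsOpen {y : E n | qF x y < ρ ^ 2 / 4} :=
        isOpen_lt (continuous_qF x) continuous_const
      filter_upwards [hop.mem_nhds h] with y hy
      simp [cut_eq_zero (le_of_lt hy)]
    exact (contDiffAt_const (c := (0:ℝ))).congr_of_eventuallyEq hev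
  · have hq : 0 < qF x z := lt_of_lt_of_le (by positivity) h
    exact ((contDiff_cutq x ρ).contDiffAt).mul (hK z hq)


lemma contDiff_wv (x : E n) (l : Fin n) : ContDiff ℝ (⊤ : ℕ∞) (fun z : E n => z l - x l) :=
  ((EuclideanSpace.proj (𝕜 := ℝ) l).contDiff).sub contDiff_const

lemma contDiffAt_KG (x : E n) (i j : Fin n) {z : E n} (hq : 0 < qF x z) (a c : Fin n) :
    ContDiffAt ℝ (⊤ : ℕ∞) (fun y => KG x i j y a c) z := by
  refine ContDiffAt.mul ?_ (contDiffAt_G x (n + 2) hq)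
  refine (contDiff_const.mul ?_).contDiffAt
  exact ((((contDiff_const.mul ((contDiff_wv x c).mul (contDiff_wv x j))).add
    (contDiff_const.mul ((contDiff_wv x a).mul (contDiff_wv x j)))).sub
    (contDiff_const.mul ((contDiff_wv x i).mul (contDiff_wv x c)))).sub
    (contDiff_const.mul ((contDiff_wv x i).mul (contDiff_wv x a))))

lemma contDiffAt_KX (x : E n) {z : E n} (hq : 0 < qF x z) (a c : Fin n) :
    ContDiffAt ℝ (⊤ : ℕ∞) (fun y => KX x y a c) z := by
  refine ContDiffAt.sub ?_ ?_
  · exact (((contDiff_wv x a).mul (contDiff_wv x c)).contDiffAt).mul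
      (contDiffAt_G x (n + 2) hq)
  · exact (contDiff_const.contDiffAt).mul (contDiffAt_G x n hq)

lemma contDiffAt_KU (x : E n) (k : Fin n) {z : E n} (hq : 0 < qF x z) (a c : Fin n) :
    ContDiffAt ℝ (⊤ : ℕ∞) (fun y => KU x k y a c) z := by
  refine ContDiffAt.sub ?_ ?_
  · refine ContDiffAt.mul ?_ (contDiffAt_G x (n + 2) hq)
    exact (((contDiff_const.mul (contDiff_wv x c)).add
      (contDiff_const.mul (contDiff_wv x a))).add
      (contDiff_const.mul (contDiff_wv x k))).contDiffAt
  · refine ContDiffAt.mul ?_ (contDiffAt_G x (n + 4) hq)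
    exact (contDiff_const.mul (((contDiff_wv x k).mul (contDiff_wv x a)).mul
      (contDiff_wv x c))).contDiffAt

/-! the full (globally smooth) test fields -/

def FG (x : E n) (ρ : ℝ) (i j : Fin n) (z : E n) (a c : Fin n) : ℝ :=
  cut ρ (qF x z) * KG x i j z a c

def FX (x : E n) (ρ : ℝ) (z : E n) (a c : Fin n) : ℝ :=
  cut ρ (qF x z) * KX x z a c

def FU (x : E n) (ρ : ℝ) (k : Fin n) (z : E n) (a c : Fin n) : ℝ :=
  cut ρ (qF x z) * KU x k z a c

lemma qF_eq_dist_sq (x z : E n) : qF x z = dist z x ^ 2 := by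
  rw [EuclideanSpace.dist_eq, Real.sq_sqrt]
  · simp [qF, Real.dist_eq, sq_abs]
  · exact Finset.sum_nonneg fun _ _ => sq_nonneg _

lemma contDiff_FG (x : E n) {ρ : ℝ} (hρ : 0 < ρ) (i j : Fin n) :
    ContDiff ℝ (⊤ : ℕ∞) (FG x ρ i j) := by
  rw [contDiff_pi]
  intro a
  rw [contDiff_pi]
  intro c
  exact contDiff_cut_mul x hρ _ (fun z hz => contDiffAt_KG x i j hz a c)

lemma contDiff_FX (x : E n) {ρ : ℝ} (hρ : 0 < ρ) :
    ContDiff ℝ (⊤ : ℕ∞) (FX x ρ) := by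
  rw [contDiff_pi]; intro a; rw [contDiff_pi]; intro c
  exact contDiff_cut_mul x hρ _ (fun z hz => contDiffAt_KX x hz a c)

lemma contDiff_FU (x : E n) {ρ : ℝ} (hρ : 0 < ρ) (k : Fin n) :
    ContDiff ℝ (⊤ : ℕ∞) (FU x ρ k) := by
  rw [contDiff_pi]; intro a; rw [contDiff_pi]; intro c
  exact contDiff_cut_mul x hρ _ (fun z hz => contDiffAt_KU x k hz a c)

/-- where `qF ≥ ρ²/2`, `F = K` (statement for convenience with `ρ² ≤ qF`). -/
lemma cutq_eq_one (x : E n) {ρ : ℝ} (hρ : 0 < ρ) {z : E n} (h : ρ ^ 2 ≤ qF x z) :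
    cut ρ (qF x z) = 1 :=
  cut_eq_one hρ (by nlinarith)

/-- `pdsE` of cutoff-modified function agrees with that of the kernel where `qF > ρ²/2`. -/
lemma pdsE_cut_eq (x : E n) {ρ : ℝ} (hρ : 0 < ρ) (K : E n → ℝ) {z : E n}
    (h : ρ ^ 2 / 2 < qF x z) (c : Fin n) :
    pdsE c (fun y => cut ρ (qF x y) * K y) z = pdsE c K z := by
  have hop : IsOpen {y : E n | ρ ^ 2 / 2 < qF x y} :=
    isOpen_lt continuous_const (continuous_qF x)
  have hev : (fun y => cut ρ (qF x y) * K y) =ᶠ[𝓝 z] K := by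
    filter_upwards [hop.mem_nhds h] with y hy
    rw [cut_eq_one hρ (le_of_lt hy), one_mul]
  rw [pdsE, pdsE, hev.fderiv_eq]

lemma G_of_qF_eq_zero (x : E n) {z : E n} (h : qF x z = 0) (m : ℕ) (hm : m ≠ 0) :
    G x m z = 0 := by
  rw [G, h, Real.sqrt_zero, zero_pow hm, inv_zero]

/-! symmetry and trace-freeness -/

lemma FG_symm (x : E n) (ρ : ℝ) (i j : Fin n) (z : E n) (a c : Fin n) :
    FG x ρ i j z a c = FG x ρ i j z c a := by
  rw [FG, FG, KG, KG]; ring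

lemma FX_symm (x : E n) (ρ : ℝ) (z : E n) (a c : Fin n) :
    FX x ρ z a c = FX x ρ z c a := by
  rw [FX, FX, KX, KX]
  have : (if a = c then (1:ℝ) else 0) = (if c = a then 1 else 0) := by simp [eq_comm]
  rw [this]; ring

lemma FU_symm (x : E n) (ρ : ℝ) (k : Fin n) (z : E n) (a c : Fin n) :
    FU x ρ k z a c = FU x ρ k z c a := by
  rw [FU, FU, KU, KU]
  have : (if a = c then (1:ℝ) else 0) = (if c = a then 1 else 0) := by simp [eq_comm]
  rw [this]; ring

lemma FG_trace (x : E n) (ρ : ℝ) (i j : Fin n) (z : E n) :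
    ∑ a, FG x ρ i j z a a = 0 := by
  have h : ∀ a : Fin n, FG x ρ i j z a a
      = (if i = a then (1:ℝ) else 0)
          * (cut ρ (qF x z) * ((z a - x a) * (z j - x j) * G x (n + 2) z))
        + (if j = a then (1:ℝ) else 0)
          * (-(cut ρ (qF x z) * ((z i - x i) * (z a - x a) * G x (n + 2) z))) := by
    intro a
    rw [FG, KG]; ring
  rw [Finset.sum_congr rfl fun a _ => h a, Finset.sum_add_distrib,
    sum_delta_mul, sum_delta_mul]
  ring

lemma KX_trace (x : E n) (hn : 0 < n) (z : E n) : ∑ a, KX x z a a = 0 := by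
  have h : ∀ a : Fin n, KX x z a a
      = (z a - x a) ^ 2 * G x (n + 2) z - (n:ℝ)⁻¹ * G x n z := by
    intro a
    rw [KX, if_pos rfl]; ring
  rw [Finset.sum_congr rfl fun a _ => h a, Finset.sum_sub_distrib, ← Finset.sum_mul,
    Finset.sum_const, Finset.card_univ, Fintype.card_fin, nsmul_eq_mul]
  have hq : ∑ a, (z a - x a) ^ 2 = qF x z := rfl
  rw [hq]
  rcases eq_or_lt_of_le (qF_nonneg x z) with h0 | h0
  · rw [← h0, G_of_qF_eq_zero x h0.symm (n + 2) (by omega),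
      G_of_qF_eq_zero x h0.symm n (by omega)]
    ring
  · rw [qG x n h0]
    field_simp
    ring

lemma FX_trace (x : E n) (hn : 0 < n) (ρ : ℝ) (z : E n) : ∑ a, FX x ρ z a a = 0 := by
  have : ∑ a, FX x ρ z a a = cut ρ (qF x z) * ∑ a, KX x z a a := by
    rw [Finset.mul_sum]; rfl
  rw [this, KX_trace x hn z, mul_zero]

lemma KU_trace (x : E n) (k : Fin n) (z : E n) : ∑ a, KU x k z a a = 0 := by
  have h : ∀ a : Fin n, KU x k z a a
      = (if k = a then (1:ℝ) else 0) * (2 * (z a - x a) * G x (n + 2) z)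
        + ((z k - x k) * G x (n + 2) z)
        - (z a - x a) ^ 2 * (((n:ℝ) + 2) * (z k - x k) * G x (n + 4) z) := by
    intro a
    rw [KU, if_pos rfl]; ring
  rw [Finset.sum_congr rfl fun a _ => h a, Finset.sum_sub_distrib, Finset.sum_add_distrib,
    sum_delta_mul, ← Finset.sum_mul, Finset.sum_const, Finset.card_univ, Fintype.card_fin,
    nsmul_eq_mul]
  have hq : ∑ a, (z a - x a) ^ 2 = qF x z := rfl
  rw [← Finset.sum_mul, hq]
  rcases eq_or_lt_of_le (qF_nonneg x z) with h0 | h0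
  · rw [G_of_qF_eq_zero x h0.symm (n + 2) (by omega), ← h0]
    ring
  · have h4 := qG x (n + 2) h0
    linear_combination (-((n:ℝ) + 2) * (z k - x k)) * h4

lemma FU_trace (x : E n) (ρ : ℝ) (k : Fin n) (z : E n) : ∑ a, FU x ρ k z a a = 0 := by
  have : ∑ a, FU x ρ k z a a = cut ρ (qF x z) * ∑ a, KU x k z a a := by
    rw [Finset.mul_sum]; rfl
  rw [this, KU_trace x k z, mul_zero]


lemma abs_coord_le_norm (v : E n) (i : Fin n) : |v i| ≤ ‖v‖ := by
  rw [EuclideanSpace.norm_eq, ← Real.sqrt_sq_eq_abs]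
  apply Real.sqrt_le_sqrt
  have : v i ^ 2 = ‖v i‖ ^ 2 := by rw [Real.norm_eq_abs, sq_abs]
  rw [this]
  exact Finset.single_le_sum (fun l _ => sq_nonneg ‖v l‖) (Finset.mem_univ i)

lemma abs_sigma_le_one {σ : Fin n → Fin n → ℝ} (hσ : ∑ i, ∑ j, (σ i j) ^ 2 = 1)
    (i j : Fin n) : |σ i j| ≤ 1 := by
  rw [← Real.sqrt_one, ← Real.sqrt_sq_eq_abs]
  apply Real.sqrt_le_sqrt
  rw [← hσ]
  calc σ i j ^ 2 ≤ ∑ l, (σ i l) ^ 2 :=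
        Finset.single_le_sum (f := fun l => σ i l ^ 2) (fun l _ => sq_nonneg _)
          (Finset.mem_univ j)
    _ ≤ ∑ l, ∑ m, (σ l m) ^ 2 :=
        Finset.single_le_sum (f := fun l => ∑ m, (σ l m) ^ 2)
          (fun l _ => Finset.sum_nonneg fun m _ => sq_nonneg _) (Finset.mem_univ i)


/-- **Master lemma**: for a globally smooth symmetric trace-free test field `F` which is
divergence-free on the closed annulus, the annulus integral of `F:σ` against `ν`
equals the difference of the sphere boundary terms. -/
lemma master {u : E n → E n} {ν : Measure (E n)} [IsFiniteMeasure ν]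
    {σ : E n → Fin n → Fin n → ℝ}
    (hu : Integrable u volume) (hσmeas : Measurable σ)
    (hσbd : ∀ᵐ y ∂ν, ∑ i, ∑ j, (σ y i j) ^ 2 = 1)
    {x : E n} {τ ρ : ℝ} (hρ : 0 < ρ) (hρτ : ρ < τ)
    {Tρ Tτ : E n → E n}
    (hTρ : IsSphereTrace u ν σ x ρ Tρ) (hTτ : IsSphereTrace u ν σ x τ Tτ)
    (F : E n → Fin n → Fin n → ℝ) (hF : ContDiff ℝ (⊤ : ℕ∞) F)
    (hsym : ∀ z, (∀ i j, F z i j = F z j i) ∧ (∑ i, F z i i = 0))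
    (hdiv : ∀ z ∈ ball x τ \ ball x ρ, ∀ i, (∑ j, pdsE j (fun y => F y i j) z) = 0) :
    ∫ z in ball x τ \ ball x ρ, (∑ i, ∑ j, F z i j * σ z i j) ∂ν
      = (∫ y in sphere x τ,
          (∑ i, ∑ j, edT n (fun l => (y l - x l) / τ) (fun l => Tτ y l) i j * F y i j) ∂(Hm n))
        - (∫ y in sphere x ρ,
          (∑ i, ∑ j, edT n (fun l => (y l - x l) / ρ) (fun l => Tρ y l) i j * F y i j) ∂(Hm n)) := by
  have Eτ := hTτ.2 F hF hsym
  have Eρ := hTρ.2 F hF hsym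
  -- continuity of the components of F
  have hFc : ∀ i j, Continuous fun z => F z i j := fun i j =>
    (continuous_apply j).comp ((continuous_apply i).comp hF.continuous)
  -- integrability of F:σ over the big ball w.r.t. ν
  have hgm : AEStronglyMeasurable (fun z => ∑ i, ∑ j, F z i j * σ z i j)
      (ν.restrict (ball x τ)) := by
    apply Measurable.aestronglyMeasurable
    apply Finset.measurable_sum
    intro i _
    apply Finset.measurable_sum
    intro j _
    exact ((hFc i j).measurable).mul
      ((measurable_pi_apply j).comp ((measurable_pi_apply i).comp hσmeas))
  obtain ⟨C, hC⟩ := (isCompact_closedBall x τ).exists_bound_of_continuousOn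
    (f := fun z => ∑ i, ∑ j, |F z i j|)
    (Continuous.continuousOn (continuous_finset_sum _ fun i _ =>
      continuous_finset_sum _ fun j _ => (hFc i j).abs))
  have hgint : IntegrableOn (fun z => ∑ i, ∑ j, F z i j * σ z i j) (ball x τ) ν := by
    apply Integrable.mono' (integrable_const C) hgm
    filter_upwards [ae_restrict_mem measurableSet_ball, ae_restrict_of_ae hσbd]
      with z hz hσz
    calc ‖∑ i, ∑ j, F z i j * σ z i j‖
        ≤ ∑ i, ‖∑ j, F z i j * σ z i j‖ := norm_sum_le _ _
      _ ≤ ∑ i, ∑ j, ‖F z i j * σ z i j‖ :=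
          Finset.sum_le_sum fun i _ => norm_sum_le _ _
      _ ≤ ∑ i, ∑ j, |F z i j| := by
          apply Finset.sum_le_sum; intro i _; apply Finset.sum_le_sum; intro j _
          rw [norm_mul, Real.norm_eq_abs, Real.norm_eq_abs]
          calc |F z i j| * |σ z i j| ≤ |F z i j| * 1 :=
                mul_le_mul_of_nonneg_left (abs_sigma_le_one hσz i j) (abs_nonneg _)
            _ = |F z i j| := mul_one _
      _ ≤ C := by
          have := hC z (ball_subset_closedBall hz)
          rwa [Real.norm_eq_abs, abs_of_nonneg (by positivity)] at this
  -- the divergence field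
  set D : Fin n → E n → ℝ := fun i z => ∑ j, pdsE j (fun y => F y i j) z with hD
  have hDc : ∀ i, Continuous (D i) := by
    intro i
    apply continuous_finset_sum
    intro j _
    have h1 : ContDiff ℝ (⊤ : ℕ∞) (fun y => F y i j) := by
      rw [contDiff_pi] at hF
      have := hF i
      rw [contDiff_pi] at this
      exact this j
    exact (h1.continuous_fderiv (by simp)).clm_apply continuous_const
  have hhm : AEStronglyMeasurable (fun z => ∑ i, u z i * D i z)
      (volume.restrict (ball x τ)) := by
    apply Finset.aestronglyMeasurable_fun_sum
    intro i _
    exact (((EuclideanSpace.proj (𝕜 := ℝ) i).continuous.comp_aestronglyMeasurable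
      (hu.aestronglyMeasurable.restrict)).mul ((hDc i).aestronglyMeasurable.restrict))
  obtain ⟨C', hC'⟩ := (isCompact_closedBall x τ).exists_bound_of_continuousOn
    (f := fun z => ∑ i, |D i z|)
    (Continuous.continuousOn (by
      apply continuous_finset_sum; intro i _; exact (hDc i).abs))
  have hhint : IntegrableOn (fun z => ∑ i, u z i * D i z) (ball x τ) volume := by
    apply Integrable.mono' ((hu.norm.const_mul C').integrableOn) hhm
    filter_upwards [ae_restrict_mem measurableSet_ball] with z hz
    calc ‖∑ i, u z i * D i z‖ ≤ ∑ i, ‖u z i * D i z‖ := norm_sum_le _ _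
      _ ≤ ∑ i, ‖u z‖ * |D i z| := by
          apply Finset.sum_le_sum; intro i _
          rw [norm_mul, Real.norm_eq_abs, Real.norm_eq_abs]
          exact mul_le_mul_of_nonneg_right (abs_coord_le_norm (u z) i) (abs_nonneg _)
      _ = ‖u z‖ * ∑ i, |D i z| := by rw [Finset.mul_sum]
      _ ≤ ‖u z‖ * C' := by
          apply mul_le_mul_of_nonneg_left _ (norm_nonneg _)
          have := hC' z (ball_subset_closedBall hz)
          rwa [Real.norm_eq_abs, abs_of_nonneg (by positivity)] at this
      _ = C' * ‖u z‖ := mul_comm _ _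
  -- difference of ball integrals equals annulus integral
  have hsub : ball x ρ ⊆ ball x τ := ball_subset_ball hρτ.le
  have hgd : ∫ z in ball x τ \ ball x ρ, (∑ i, ∑ j, F z i j * σ z i j) ∂ν
      = (∫ z in ball x τ, (∑ i, ∑ j, F z i j * σ z i j) ∂ν)
        - ∫ z in ball x ρ, (∑ i, ∑ j, F z i j * σ z i j) ∂ν :=
    integral_diff measurableSet_ball hgint hsub
  have hhd : ∫ z in ball x τ \ ball x ρ, (∑ i, u z i * D i z) ∂volume
      = (∫ z in ball x τ, (∑ i, u z i * D i z) ∂volume)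
        - ∫ z in ball x ρ, (∑ i, u z i * D i z) ∂volume :=
    integral_diff measurableSet_ball hhint hsub
  have hann0 : ∫ z in ball x τ \ ball x ρ, (∑ i, u z i * D i z) ∂volume = 0 := by
    rw [setIntegral_congr_fun (measurableSet_ball.diff measurableSet_ball)
      (g := fun _ => (0:ℝ)) ?_]
    · simp
    · intro z hz
      refine Finset.sum_eq_zero fun i _ => ?_
      have := hdiv z hz i
      simp only [hD, this, mul_zero]
  rw [hgd, Eτ, Eρ]
  have := hhd
  rw [hann0] at this
  have h2 : (∫ z in ball x τ, (∑ i, u z i * D i z) ∂volume)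
      = ∫ z in ball x ρ, (∑ i, u z i * D i z) ∂volume := by linarith
  rw [hD] at h2
  rw [h2]
  ring


/-- pairing `edT v b : M` for symmetric trace-free `M` reduces to `v ⊗ b : M`. -/
lemma pair_edT (v b : Fin n → ℝ) (M : Fin n → Fin n → ℝ)
    (hsym : ∀ a c, M a c = M c a) (htr : ∑ a, M a a = 0) :
    ∑ a, ∑ c, edT n v b a c * M a c = ∑ a, ∑ c, v a * b c * M a c := by
  have h1 : ∀ a c, edT n v b a c * M a c
      = (v a * b c * M a c) / 2 + (v c * b a * M a c) / 2
        - ((∑ l, v l * b l) / n) * ((if a = c then (1:ℝ) else 0) * M a c) := by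
    intro a c
    rw [edT]; ring
  calc ∑ a, ∑ c, edT n v b a c * M a c
      = ∑ a, ((∑ c, (v a * b c * M a c) / 2) + (∑ c, (v c * b a * M a c) / 2)
          - ((∑ l, v l * b l) / n) * M a a) := by
        refine Finset.sum_congr rfl fun a _ => ?_
        rw [Finset.sum_congr rfl fun c _ => h1 a c, Finset.sum_sub_distrib,
          Finset.sum_add_distrib, ← Finset.mul_sum, sum_delta_mul]
    _ = (∑ a, ∑ c, (v a * b c * M a c) / 2) + (∑ a, ∑ c, (v c * b a * M a c) / 2)
          - ((∑ l, v l * b l) / n) * ∑ a, M a a := by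
        rw [Finset.sum_sub_distrib, Finset.sum_add_distrib, ← Finset.mul_sum]
    _ = (∑ a, ∑ c, (v a * b c * M a c) / 2) + (∑ a, ∑ c, (v a * b c * M a c) / 2) := by
        rw [htr, mul_zero, sub_zero]
        congr 1
        rw [Finset.sum_comm]
        refine Finset.sum_congr rfl fun a _ => Finset.sum_congr rfl fun c _ => ?_
        rw [hsym a c]
    _ = ∑ a, ∑ c, v a * b c * M a c := by
        rw [← Finset.sum_add_distrib]
        refine Finset.sum_congr rfl fun a _ => ?_
        rw [← Finset.sum_add_distrib]
        exact Finset.sum_congr rfl fun c _ => by ring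

/-- sphere pointwise value, Γ kernel -/
lemma sphere_val_G (x : E n) {ρ r : ℝ} (hρ : 0 < ρ) (hr : ρ ≤ r) (i j : Fin n)
    (T : E n → E n) {y : E n} (hy : dist y x = r) :
    ∑ a, ∑ c, edT n (fun l => (y l - x l) / r) (fun l => T y l) a c * FG x ρ i j y a c
      = (1 / (2 * r ^ n)) * (T y i * ((y j - x j) / r) - ((y i - x i) / r) * T y j) := by
  have hr0 : 0 < r := lt_of_lt_of_le hρ hr
  have hq : qF x y = r ^ 2 := by rw [qF_eq_dist_sq, hy]
  have hq0 : 0 < qF x y := by rw [hq]; positivity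
  have hsq : Real.sqrt (qF x y) = r := by rw [hq, Real.sqrt_sq hr0.le]
  have hG2 : G x (n + 2) y = (r ^ (n + 2))⁻¹ := by rw [G, hsq]
  have hcut : cut ρ (qF x y) = 1 := cutq_eq_one x hρ (by rw [hq]; nlinarith)
  rw [pair_edT _ _ _ (fun a c => FG_symm x ρ i j y a c) (FG_trace x ρ i j y)]
  have hFK : ∀ a c, FG x ρ i j y a c = KG x i j y a c := by
    intro a c; rw [FG, hcut, one_mul]
  set St := ∑ c, T y c * (y c - x c) with hSt
  have inner : ∀ a, ∑ c, (y a - x a) / r * T y c * FG x ρ i j y a c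
      = (y a - x a) ^ 2 * ((T y i * (y j - x j) - T y j * (y i - x i))
            * G x (n + 2) y / (2 * r))
        + (if i = a then (1:ℝ) else 0) * (St * ((y a - x a) / r) * (y j - x j)
            * G x (n + 2) y / 2)
        + (if j = a then (1:ℝ) else 0) * (-(St * ((y a - x a) / r) * (y i - x i)
            * G x (n + 2) y / 2)) := by
    intro a
    have hdec : ∀ c, (y a - x a) / r * T y c * FG x ρ i j y a c
        = (if i = c then (1:ℝ) else 0) * ((y a - x a) / r * T y c
            * (2⁻¹ * ((y a - x a) * (y j - x j)) * G x (n + 2) y))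
          + (if j = c then (1:ℝ) else 0) * (-((y a - x a) / r * T y c
            * (2⁻¹ * ((y i - x i) * (y a - x a)) * G x (n + 2) y)))
          + (T y c * (y c - x c)) * ((y a - x a) / r
            * (2⁻¹ * ((if i = a then (1:ℝ) else 0) * (y j - x j)
              - (if j = a then (1:ℝ) else 0) * (y i - x i)) * G x (n + 2) y)) := by
      intro c
      rw [hFK, KG]; ring
    rw [Finset.sum_congr rfl fun c _ => hdec c, Finset.sum_add_distrib,
      Finset.sum_add_distrib, sum_delta_mul, sum_delta_mul, ← Finset.sum_mul, ← hSt]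
    ring
  rw [Finset.sum_congr rfl fun a _ => inner a, Finset.sum_add_distrib,
    Finset.sum_add_distrib, sum_delta_mul, sum_delta_mul, ← Finset.sum_mul]
  have hqq : ∑ a, (y a - x a) ^ 2 = r ^ 2 := by rw [← hq]; rfl
  rw [hqq, hG2, pow_add]
  field_simp
  ring

/-- sphere pointwise value, Ξ kernel -/
lemma sphere_val_X (x : E n) (hn : 0 < n) {ρ r : ℝ} (hρ : 0 < ρ) (hr : ρ ≤ r)
    (T : E n → E n) {y : E n} (hy : dist y x = r) :
    ∑ a, ∑ c, edT n (fun l => (y l - x l) / r) (fun l => T y l) a c * FX x ρ y a c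
      = (((n:ℝ) - 1) / (n:ℝ)) * (1 / r ^ n) * (∑ i, T y i * ((y i - x i) / r)) := by
  have hr0 : 0 < r := lt_of_lt_of_le hρ hr
  have hq : qF x y = r ^ 2 := by rw [qF_eq_dist_sq, hy]
  have hq0 : 0 < qF x y := by rw [hq]; positivity
  have hsq : Real.sqrt (qF x y) = r := by rw [hq, Real.sqrt_sq hr0.le]
  have hG2 : G x (n + 2) y = (r ^ (n + 2))⁻¹ := by rw [G, hsq]
  have hG0 : G x n y = (r ^ n)⁻¹ := by rw [G, hsq]
  have hcut : cut ρ (qF x y) = 1 := cutq_eq_one x hρ (by rw [hq]; nlinarith)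
  rw [pair_edT _ _ _ (fun a c => FX_symm x ρ y a c) (FX_trace x hn ρ y)]
  have hFK : ∀ a c, FX x ρ y a c = KX x y a c := by
    intro a c; rw [FX, hcut, one_mul]
  set St := ∑ c, T y c * (y c - x c) with hSt
  have inner : ∀ a, ∑ c, (y a - x a) / r * T y c * FX x ρ y a c
      = (y a - x a) ^ 2 * (St * G x (n + 2) y / r)
        + (T y a * (y a - x a)) * (-((n:ℝ)⁻¹ * G x n y / r)) := by
    intro a
    have hdec : ∀ c, (y a - x a) / r * T y c * FX x ρ y a c
        = (T y c * (y c - x c)) * ((y a - x a) / r * (y a - x a) * G x (n + 2) y)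
          + (if a = c then (1:ℝ) else 0) * (-((y a - x a) / r * T y c
              * ((n:ℝ)⁻¹ * G x n y))) := by
      intro c
      rw [hFK, KX]; ring
    rw [Finset.sum_congr rfl fun c _ => hdec c, Finset.sum_add_distrib,
      sum_delta_mul, ← Finset.sum_mul, ← hSt]
    ring
  rw [Finset.sum_congr rfl fun a _ => inner a, Finset.sum_add_distrib,
    ← Finset.sum_mul, ← Finset.sum_mul, ← hSt]
  have hqq : ∑ a, (y a - x a) ^ 2 = r ^ 2 := by rw [← hq]; rfl
  have hSt2 : ∑ i, T y i * ((y i - x i) / r) = St / r := by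
    rw [hSt, Finset.sum_div]
    exact Finset.sum_congr rfl fun c _ => by ring
  rw [hqq, hG2, hG0, hSt2, pow_add]
  have hn' : (n:ℝ) ≠ 0 := Nat.cast_ne_zero.2 hn.ne'
  field_simp
  ring

/-- sphere pointwise value, Υ kernel -/
lemma sphere_val_U (x : E n) {ρ r : ℝ} (hρ : 0 < ρ) (hr : ρ ≤ r) (k : Fin n)
    (T : E n → E n) {y : E n} (hy : dist y x = r) :
    ∑ a, ∑ c, edT n (fun l => (y l - x l) / r) (fun l => T y l) a c * FU x ρ k y a c
      = (1 / r ^ (n + 1)) * (T y k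
          - (n:ℝ) * (∑ i, (y i - x i) / r * T y i) * ((y k - x k) / r)) := by
  have hr0 : 0 < r := lt_of_lt_of_le hρ hr
  have hq : qF x y = r ^ 2 := by rw [qF_eq_dist_sq, hy]
  have hq0 : 0 < qF x y := by rw [hq]; positivity
  have hsq : Real.sqrt (qF x y) = r := by rw [hq, Real.sqrt_sq hr0.le]
  have hG2 : G x (n + 2) y = (r ^ (n + 2))⁻¹ := by rw [G, hsq]
  have hG4 : G x (n + 4) y = (r ^ (n + 4))⁻¹ := by rw [G, hsq]
  have hcut : cut ρ (qF x y) = 1 := cutq_eq_one x hρ (by rw [hq]; nlinarith)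
  rw [pair_edT _ _ _ (fun a c => FU_symm x ρ k y a c) (FU_trace x ρ k y)]
  have hFK : ∀ a c, FU x ρ k y a c = KU x k y a c := by
    intro a c; rw [FU, hcut, one_mul]
  set St := ∑ c, T y c * (y c - x c) with hSt
  have inner : ∀ a, ∑ c, (y a - x a) / r * T y c * FU x ρ k y a c
      = (if k = a then (1:ℝ) else 0) * (St * ((y a - x a) / r) * G x (n + 2) y)
        + (y a - x a) ^ 2 * (T y k * G x (n + 2) y / r
            - ((n:ℝ) + 2) * (y k - x k) * G x (n + 4) y * St / r)
        + (T y a * (y a - x a)) * ((y k - x k) * G x (n + 2) y / r) := by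
    intro a
    have hdec : ∀ c, (y a - x a) / r * T y c * FU x ρ k y a c
        = (T y c * (y c - x c)) * ((if k = a then (1:ℝ) else 0)
              * ((y a - x a) / r) * G x (n + 2) y)
          + (if k = c then (1:ℝ) else 0) * ((y a - x a) / r * T y c
              * (y a - x a) * G x (n + 2) y)
          + (if a = c then (1:ℝ) else 0) * ((y a - x a) / r * T y c
              * (y k - x k) * G x (n + 2) y)
          + (T y c * (y c - x c)) * (-(((n:ℝ) + 2) * (y k - x k) * (y a - x a)
              * ((y a - x a) / r) * G x (n + 4) y)) := by
      intro c
      rw [hFK, KU]; ring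
    rw [Finset.sum_congr rfl fun c _ => hdec c, Finset.sum_add_distrib,
      Finset.sum_add_distrib, Finset.sum_add_distrib, sum_delta_mul, sum_delta_mul,
      ← Finset.sum_mul, ← Finset.sum_mul, ← hSt]
    ring
  rw [Finset.sum_congr rfl fun a _ => inner a, Finset.sum_add_distrib,
    Finset.sum_add_distrib, sum_delta_mul, ← Finset.sum_mul, ← Finset.sum_mul, ← hSt]
  have hqq : ∑ a, (y a - x a) ^ 2 = r ^ 2 := by rw [← hq]; rfl
  have hSt2 : ∑ i, (y i - x i) / r * T y i = St / r := by
    rw [hSt, Finset.sum_div]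
    exact Finset.sum_congr rfl fun c _ => by ring
  rw [hqq, hG2, hG4, hSt2]
  have e1 : (r:ℝ) ^ (n + 2) = r ^ n * r ^ 2 := by rw [pow_add]
  have e2 : (r:ℝ) ^ (n + 4) = r ^ n * r ^ 4 := by rw [pow_add]
  have e3 : (r:ℝ) ^ (n + 1) = r ^ n * r := by rw [pow_add, pow_one]
  rw [e1, e2, e3]
  field_simp
  ring


/-- annulus pointwise value, Γ kernel -/
lemma ann_val_G (x : E n) {ρ : ℝ} (hρ : 0 < ρ) (i j : Fin n) {y : E n}
    (hρq : ρ ^ 2 ≤ qF x y) (σm : Fin n → Fin n → ℝ)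
    (hσsym : ∀ a c, σm a c = σm c a) :
    ∑ a, ∑ c, FG x ρ i j y a c * σm a c
      = (((∑ l, σm i l * (y l - x l)) * (y j - x j)
          - (y i - x i) * (∑ l, σm j l * (y l - x l))) / (∑ l, (y l - x l) ^ 2))
        / (Real.sqrt (∑ l, (y l - x l) ^ 2)) ^ n := by
  have hq0 : 0 < qF x y := lt_of_lt_of_le (by positivity) hρq
  have hcut : cut ρ (qF x y) = 1 := cutq_eq_one x hρ hρq
  have hFK : ∀ a c, FG x ρ i j y a c = KG x i j y a c := by
    intro a c; rw [FG, hcut, one_mul]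
  have hs0 : 0 < Real.sqrt (qF x y) := Real.sqrt_pos.2 hq0
  have inner : ∀ a, ∑ c, FG x ρ i j y a c * σm a c
      = (if i = a then (1:ℝ) else 0)
          * ((∑ c, σm a c * (y c - x c)) * (2⁻¹ * (y j - x j) * G x (n + 2) y))
        + (if j = a then (1:ℝ) else 0)
          * (-((∑ c, σm a c * (y c - x c)) * (2⁻¹ * (y i - x i) * G x (n + 2) y)))
        + (σm i a * (y a - x a)) * (2⁻¹ * (y j - x j) * G x (n + 2) y)
        + (σm j a * (y a - x a)) * (-(2⁻¹ * (y i - x i) * G x (n + 2) y)) := by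
    intro a
    have hdec : ∀ c, FG x ρ i j y a c * σm a c
        = (σm a c * (y c - x c)) * ((if i = a then (1:ℝ) else 0)
              * 2⁻¹ * (y j - x j) * G x (n + 2) y)
          + (if i = c then (1:ℝ) else 0)
              * (2⁻¹ * (y a - x a) * (y j - x j) * G x (n + 2) y * σm a c)
          + (σm a c * (y c - x c)) * (-((if j = a then (1:ℝ) else 0)
              * 2⁻¹ * (y i - x i) * G x (n + 2) y))
          + (if j = c then (1:ℝ) else 0)
              * (-(2⁻¹ * (y i - x i) * (y a - x a) * G x (n + 2) y * σm a c)) := by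
      intro c
      rw [hFK, KG]; ring
    rw [Finset.sum_congr rfl fun c _ => hdec c, Finset.sum_add_distrib,
      Finset.sum_add_distrib, Finset.sum_add_distrib, sum_delta_mul, sum_delta_mul,
      ← Finset.sum_mul, ← Finset.sum_mul]
    rw [hσsym i a, hσsym j a]
    ring
  rw [Finset.sum_congr rfl fun a _ => inner a, Finset.sum_add_distrib,
    Finset.sum_add_distrib, Finset.sum_add_distrib, sum_delta_mul, sum_delta_mul,
    ← Finset.sum_mul, ← Finset.sum_mul]
  have hqq : (∑ l, (y l - x l) ^ 2) = qF x y := rfl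
  have hG2 : G x (n + 2) y = (Real.sqrt (qF x y) ^ n * qF x y)⁻¹ := by
    rw [G, pow_add, sq_sqrt_qF]
  rw [hqq, hG2]
  field_simp
  ring

/-- annulus pointwise value, Ξ kernel -/
lemma ann_val_X (x : E n) (hn : 0 < n) {ρ : ℝ} (hρ : 0 < ρ) {y : E n}
    (hρq : ρ ^ 2 ≤ qF x y) (σm : Fin n → Fin n → ℝ) :
    ∑ a, ∑ c, FX x ρ y a c * σm a c
      = ((∑ l, ∑ m, (y l - x l) * σm l m * (y m - x m)) / (∑ l, (y l - x l) ^ 2)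
          - (∑ l, σm l l) / (n : ℝ))
        / (Real.sqrt (∑ l, (y l - x l) ^ 2)) ^ n := by
  have hq0 : 0 < qF x y := lt_of_lt_of_le (by positivity) hρq
  have hcut : cut ρ (qF x y) = 1 := cutq_eq_one x hρ hρq
  have hFK : ∀ a c, FX x ρ y a c = KX x y a c := by
    intro a c; rw [FX, hcut, one_mul]
  have hs0 : 0 < Real.sqrt (qF x y) := Real.sqrt_pos.2 hq0
  have hn' : (n:ℝ) ≠ 0 := Nat.cast_ne_zero.2 hn.ne'
  have inner : ∀ a, ∑ c, FX x ρ y a c * σm a c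
      = ((y a - x a) * ∑ c, σm a c * (y c - x c)) * G x (n + 2) y
        + σm a a * (-((n:ℝ)⁻¹ * G x n y)) := by
    intro a
    have hdec : ∀ c, FX x ρ y a c * σm a c
        = (σm a c * (y c - x c)) * ((y a - x a) * G x (n + 2) y)
          + (if a = c then (1:ℝ) else 0) * (-((n:ℝ)⁻¹ * G x n y * σm a c)) := by
      intro c
      rw [hFK, KX]; ring
    rw [Finset.sum_congr rfl fun c _ => hdec c, Finset.sum_add_distrib,
      sum_delta_mul, ← Finset.sum_mul]
    ring
  rw [Finset.sum_congr rfl fun a _ => inner a, Finset.sum_add_distrib,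
    ← Finset.sum_mul, ← Finset.sum_mul]
  have hW : ∑ a, ((y a - x a) * ∑ c, σm a c * (y c - x c))
      = ∑ l, ∑ m, (y l - x l) * σm l m * (y m - x m) := by
    refine Finset.sum_congr rfl fun l _ => ?_
    rw [Finset.mul_sum]
    exact Finset.sum_congr rfl fun m _ => by ring
  have hqq : (∑ l, (y l - x l) ^ 2) = qF x y := rfl
  have hG2 : G x (n + 2) y = (Real.sqrt (qF x y) ^ n * qF x y)⁻¹ := by
    rw [G, pow_add, sq_sqrt_qF]
  rw [hW, hqq, hG2, G]
  field_simp
  ring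

/-- annulus pointwise value, Υ kernel -/
lemma ann_val_U (x : E n) {ρ : ℝ} (hρ : 0 < ρ) (k : Fin n) {y : E n}
    (hρq : ρ ^ 2 ≤ qF x y) (σm : Fin n → Fin n → ℝ)
    (hσsym : ∀ a c, σm a c = σm c a) :
    ∑ a, ∑ c, FU x ρ k y a c * σm a c
      = (2 * (∑ l, σm k l * (y l - x l)) / Real.sqrt (∑ l, (y l - x l) ^ 2)
          - ((n:ℝ) + 2) * ((∑ l, ∑ m, (y l - x l) * σm l m * (y m - x m))
              / (∑ l, (y l - x l) ^ 2))
            * ((y k - x k) / Real.sqrt (∑ l, (y l - x l) ^ 2))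
          + (∑ l, σm l l) * ((y k - x k) / Real.sqrt (∑ l, (y l - x l) ^ 2)))
        / (Real.sqrt (∑ l, (y l - x l) ^ 2)) ^ (n + 1) := by
  have hq0 : 0 < qF x y := lt_of_lt_of_le (by positivity) hρq
  have hcut : cut ρ (qF x y) = 1 := cutq_eq_one x hρ hρq
  have hFK : ∀ a c, FU x ρ k y a c = KU x k y a c := by
    intro a c; rw [FU, hcut, one_mul]
  have hs0 : 0 < Real.sqrt (qF x y) := Real.sqrt_pos.2 hq0
  have inner : ∀ a, ∑ c, FU x ρ k y a c * σm a c
      = (if k = a then (1:ℝ) else 0) * ((∑ c, σm a c * (y c - x c)) * G x (n + 2) y)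
        + (σm k a * (y a - x a)) * G x (n + 2) y
        + σm a a * ((y k - x k) * G x (n + 2) y)
        + ((y a - x a) * ∑ c, σm a c * (y c - x c))
            * (-(((n:ℝ) + 2) * (y k - x k) * G x (n + 4) y)) := by
    intro a
    have hdec : ∀ c, FU x ρ k y a c * σm a c
        = (σm a c * (y c - x c)) * ((if k = a then (1:ℝ) else 0) * G x (n + 2) y)
          + (if k = c then (1:ℝ) else 0) * ((y a - x a) * G x (n + 2) y * σm a c)
          + (if a = c then (1:ℝ) else 0) * ((y k - x k) * G x (n + 2) y * σm a c)
          + (σm a c * (y c - x c)) * (-(((n:ℝ) + 2) * (y k - x k) * (y a - x a)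
              * G x (n + 4) y)) := by
      intro c
      rw [hFK, KU]; ring
    rw [Finset.sum_congr rfl fun c _ => hdec c, Finset.sum_add_distrib,
      Finset.sum_add_distrib, Finset.sum_add_distrib, sum_delta_mul, sum_delta_mul,
      ← Finset.sum_mul, ← Finset.sum_mul]
    rw [hσsym a k]
    ring
  rw [Finset.sum_congr rfl fun a _ => inner a, Finset.sum_add_distrib,
    Finset.sum_add_distrib, Finset.sum_add_distrib, sum_delta_mul,
    ← Finset.sum_mul, ← Finset.sum_mul, ← Finset.sum_mul]
  have hW : ∑ a, ((y a - x a) * ∑ c, σm a c * (y c - x c))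
      = ∑ l, ∑ m, (y l - x l) * σm l m * (y m - x m) := by
    refine Finset.sum_congr rfl fun l _ => ?_
    rw [Finset.mul_sum]
    exact Finset.sum_congr rfl fun m _ => by ring
  have hqq : (∑ l, (y l - x l) ^ 2) = qF x y := rfl
  have hG2 : G x (n + 2) y = (Real.sqrt (qF x y) ^ (n + 1) * Real.sqrt (qF x y))⁻¹ := by
    rw [G, ← pow_succ]
  have hG4 : G x (n + 4) y
      = (Real.sqrt (qF x y) ^ (n + 1) * Real.sqrt (qF x y) * qF x y)⁻¹ := by
    rw [G]
    have : n + 4 = (n + 1) + 1 + 2 := by omega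
    rw [this, pow_add, pow_add, sq_sqrt_qF, pow_one]
  rw [hW, hqq, hG2, hG4]
  field_simp
  ring

end NLR

open NLR

/-- non-local representation of the projection ingredients:
for `u ∈ BD_dev(ℝⁿ)` (with `ℰ_d u = σ·ν`, `ν = |ℰ_d u|`), every `x`, `0 < ρ < τ`
and boundary traces on the two spheres, the operators `A_{ρ,x}`, `γ_{ρ,x}`, `s_{ρ,x}`
are obtained from the corresponding operators at radius `τ` plus the integral over
the annulus of the zero-homogeneous kernels `Γ`, `Ξ`, `Υ` against `ℰ_d u`. -/
theorem nonlocal_representation {n : ℕ} (hn : 3 ≤ n)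
    (u : EuclideanSpace ℝ (Fin n) → EuclideanSpace ℝ (Fin n))
    (hu : Integrable u volume)
    (ν : Measure (EuclideanSpace ℝ (Fin n))) (hνfin : IsFiniteMeasure ν)
    (σ : EuclideanSpace ℝ (Fin n) → Fin n → Fin n → ℝ) (hσmeas : Measurable σ)
    (hσpolar : ∀ᵐ x ∂ν, (∀ i j, σ x i j = σ x j i) ∧ (∑ i, σ x i i = 0) ∧
      (∑ i, ∑ j, (σ x i j) ^ 2 = 1))
    (hGG : ∀ φ : EuclideanSpace ℝ (Fin n) → Fin n → Fin n → ℝ,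
      ContDiff ℝ (⊤ : ℕ∞) φ → HasCompactSupport φ →
      (∀ x, (∀ i j, φ x i j = φ x j i) ∧ (∑ i, φ x i i = 0)) →
      ∫ x, (∑ i, ∑ j, φ x i j * σ x i j) ∂ν
        = ∫ x, (∑ i, (∑ j, pdsE j (fun y => φ y i j) x) * u x i) ∂volume)
    (x : EuclideanSpace ℝ (Fin n)) (τ ρ : ℝ) (hρ : 0 < ρ) (hρτ : ρ < τ)
    (Tρ Tτ : EuclideanSpace ℝ (Fin n) → EuclideanSpace ℝ (Fin n))
    (hTρ : IsSphereTrace u ν σ x ρ Tρ) (hTτ : IsSphereTrace u ν σ x τ Tτ) :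
    (∀ i j, ABall x ρ Tρ i j =
      -(1 / omegaN n) *
        (∫ y in ball x τ \ ball x ρ,
          (((∑ l, σ y i l * (y l - x l)) * (y j - x j)
              - (y i - x i) * (∑ l, σ y j l * (y l - x l))) / (∑ l, (y l - x l) ^ 2))
            / (Real.sqrt (∑ l, (y l - x l) ^ 2)) ^ n ∂ν)
      + ABall x τ Tτ i j) ∧
    (∀ i j : Fin n, gBall x ρ Tρ * (if i = j then (1 : ℝ) else 0) =
      -(1 / (((n : ℝ) - 1) * omegaN n)) *
        (∫ y in ball x τ \ ball x ρ,
          (((∑ l, ∑ m, (y l - x l) * σ y l m * (y m - x m)) / (∑ l, (y l - x l) ^ 2)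
              - (∑ l, σ y l l) / (n : ℝ)) * (if i = j then (1 : ℝ) else 0))
            / (Real.sqrt (∑ l, (y l - x l) ^ 2)) ^ n ∂ν)
      + gBall x τ Tτ * (if i = j then (1 : ℝ) else 0)) ∧
    (∀ k, sBall x ρ Tρ k =
      -(1 / (((n : ℝ) - 1) * omegaN n)) *
        (∫ y in ball x τ \ ball x ρ,
          (2 * (∑ l, σ y k l * (y l - x l)) / Real.sqrt (∑ l, (y l - x l) ^ 2)
            - ((n : ℝ) + 2) *
                ((∑ l, ∑ m, (y l - x l) * σ y l m * (y m - x m)) / (∑ l, (y l - x l) ^ 2))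
                * ((y k - x k) / Real.sqrt (∑ l, (y l - x l) ^ 2))
            + (∑ l, σ y l l) * ((y k - x k) / Real.sqrt (∑ l, (y l - x l) ^ 2)))
            / (Real.sqrt (∑ l, (y l - x l) ^ 2)) ^ (n + 1) ∂ν)
      + sBall x τ Tτ k) := by
  haveI := hνfin
  have hn0 : 0 < n := by omega
  have hτ : 0 < τ := hρ.trans hρτ
  have hω : 0 < omegaN n :=
    ENNReal.toReal_pos (measure_ball_pos _ _ one_pos).ne' measure_ball_lt_top.ne
  have hω' : omegaN n ≠ 0 := hω.ne'
  have hρn : (ρ:ℝ) ^ n ≠ 0 := pow_ne_zero _ hρ.ne'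
  have hτn : (τ:ℝ) ^ n ≠ 0 := pow_ne_zero _ hτ.ne'
  have hρn1 : (ρ:ℝ) ^ (n+1) ≠ 0 := pow_ne_zero _ hρ.ne'
  have hτn1 : (τ:ℝ) ^ (n+1) ≠ 0 := pow_ne_zero _ hτ.ne'
  have hn3 : (3:ℝ) ≤ (n:ℝ) := by exact_mod_cast hn
  have hnR : (n:ℝ) ≠ 0 := by linarith
  have hn1 : (n:ℝ) - 1 ≠ 0 := by linarith
  have hσbd : ∀ᵐ y ∂ν, ∑ i, ∑ j, (σ y i j) ^ 2 = 1 := hσpolar.mono fun y h => h.2.2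
  have hann : MeasurableSet (ball x τ \ ball x ρ) :=
    measurableSet_ball.diff measurableSet_ball
  have hannq : ∀ y ∈ ball x τ \ ball x ρ, ρ ^ 2 ≤ NLR.qF x y := by
    intro y hy
    rw [NLR.qF_eq_dist_sq]
    exact pow_le_pow_left₀ hρ.le (le_of_not_gt fun h => hy.2 (Metric.mem_ball.mpr h)) 2
  refine ⟨?_, ?_, ?_⟩
  · -- part 1 : ABall / Γ kernel
    intro i j
    have hdivF : ∀ z ∈ ball x τ \ ball x ρ, ∀ a,
        ∑ c, pdsE c (fun y => FG x ρ i j y a c) z = 0 := by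
      intro z hz a
      have hq2 : ρ ^ 2 ≤ qF x z := hannq z hz
      have hq0 : 0 < qF x z := lt_of_lt_of_le (by positivity) hq2
      have hc : ∀ c, pdsE c (fun y => FG x ρ i j y a c) z
          = pdsE c (fun y => KG x i j y a c) z := by
        intro c
        have := pdsE_cut_eq x hρ (fun y => KG x i j y a c)
          (lt_of_lt_of_le (by nlinarith) hq2) c
        simpa [FG] using this
      rw [Finset.sum_congr rfl fun c _ => hc c]
      exact divKG x i j hq0 a
    have hMG := master hu hσmeas hσbd hρ hρτ hTρ hTτ (FG x ρ i j)
      (contDiff_FG x hρ i j)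
      (fun z => ⟨fun a c => FG_symm x ρ i j z a c, FG_trace x ρ i j z⟩) hdivF
    have hL : (∫ z in ball x τ \ ball x ρ,
          (∑ a, ∑ c, FG x ρ i j z a c * σ z a c) ∂ν)
        = ∫ y in ball x τ \ ball x ρ,
          (((∑ l, σ y i l * (y l - x l)) * (y j - x j)
              - (y i - x i) * (∑ l, σ y j l * (y l - x l))) / (∑ l, (y l - x l) ^ 2))
            / (Real.sqrt (∑ l, (y l - x l) ^ 2)) ^ n ∂ν := by
      apply integral_congr_ae
      filter_upwards [ae_restrict_mem hann, ae_restrict_of_ae hσpolar] with y hy hσy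
      exact ann_val_G x hρ i j (hannq y hy) (σ y) hσy.1
    have hSτ : (∫ y in sphere x τ,
          (∑ a, ∑ c, edT n (fun l => (y l - x l) / τ) (fun l => Tτ y l) a c
            * FG x ρ i j y a c) ∂(Hm n))
        = (1 / (2 * τ ^ n)) * ∫ y in sphere x τ,
            (Tτ y i * ((y j - x j) / τ) - ((y i - x i) / τ) * Tτ y j) ∂(Hm n) := by
      rw [setIntegral_congr_fun isClosed_sphere.measurableSet
        (fun y hy => sphere_val_G x hρ hρτ.le i j Tτ (Metric.mem_sphere.mp hy))]
      exact integral_const_mul _ _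
    have hSρ : (∫ y in sphere x ρ,
          (∑ a, ∑ c, edT n (fun l => (y l - x l) / ρ) (fun l => Tρ y l) a c
            * FG x ρ i j y a c) ∂(Hm n))
        = (1 / (2 * ρ ^ n)) * ∫ y in sphere x ρ,
            (Tρ y i * ((y j - x j) / ρ) - ((y i - x i) / ρ) * Tρ y j) ∂(Hm n) := by
      rw [setIntegral_congr_fun isClosed_sphere.measurableSet
        (fun y hy => sphere_val_G x hρ le_rfl i j Tρ (Metric.mem_sphere.mp hy))]
      exact integral_const_mul _ _
    have key := hMG
    rw [hL, hSτ, hSρ] at key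
    rw [ABall, ABall, key]
    field_simp
    ring
  · -- part 2 : gBall / Ξ kernel
    intro i j
    rcases eq_or_ne i j with hij | hij
    · subst hij
      simp only [eq_self_iff_true, if_true, mul_one]
      have hdivF : ∀ z ∈ ball x τ \ ball x ρ, ∀ a,
          ∑ c, pdsE c (fun y => FX x ρ y a c) z = 0 := by
        intro z hz a
        have hq2 : ρ ^ 2 ≤ qF x z := hannq z hz
        have hq0 : 0 < qF x z := lt_of_lt_of_le (by positivity) hq2
        have hc : ∀ c, pdsE c (fun y => FX x ρ y a c) z
            = pdsE c (fun y => KX x y a c) z := by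
          intro c
          have := pdsE_cut_eq x hρ (fun y => KX x y a c)
            (lt_of_lt_of_le (by nlinarith) hq2) c
          simpa [FX] using this
        rw [Finset.sum_congr rfl fun c _ => hc c]
        exact divKX x hnR hq0 a
      have hMG := master hu hσmeas hσbd hρ hρτ hTρ hTτ (FX x ρ)
        (contDiff_FX x hρ)
        (fun z => ⟨fun a c => FX_symm x ρ z a c, FX_trace x hn0 ρ z⟩) hdivF
      have hL : (∫ z in ball x τ \ ball x ρ,
            (∑ a, ∑ c, FX x ρ z a c * σ z a c) ∂ν)
          = ∫ y in ball x τ \ ball x ρ,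
            ((∑ l, ∑ m, (y l - x l) * σ y l m * (y m - x m)) / (∑ l, (y l - x l) ^ 2)
                - (∑ l, σ y l l) / (n : ℝ))
              / (Real.sqrt (∑ l, (y l - x l) ^ 2)) ^ n ∂ν := by
        apply integral_congr_ae
        filter_upwards [ae_restrict_mem hann] with y hy
        exact ann_val_X x hn0 hρ (hannq y hy) (σ y)
      have hSτ : (∫ y in sphere x τ,
            (∑ a, ∑ c, edT n (fun l => (y l - x l) / τ) (fun l => Tτ y l) a c
              * FX x ρ y a c) ∂(Hm n))
          = (((n:ℝ) - 1) / (n:ℝ)) * ((1 / τ ^ n) * ∫ y in sphere x τ,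
              (∑ i, Tτ y i * ((y i - x i) / τ)) ∂(Hm n)) := by
        rw [setIntegral_congr_fun isClosed_sphere.measurableSet
          (fun y hy => sphere_val_X x hn0 hρ hρτ.le Tτ (Metric.mem_sphere.mp hy))]
        rw [show (fun y => ((n:ℝ) - 1) / (n:ℝ) * (1 / τ ^ n)
            * (∑ i, Tτ y i * ((y i - x i) / τ)))
          = fun y => ((n:ℝ) - 1) / (n:ℝ) * ((1 / τ ^ n)
            * (∑ i, Tτ y i * ((y i - x i) / τ))) from by funext y; ring]
        rw [integral_const_mul, integral_const_mul]
      have hSρ : (∫ y in sphere x ρ,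
            (∑ a, ∑ c, edT n (fun l => (y l - x l) / ρ) (fun l => Tρ y l) a c
              * FX x ρ y a c) ∂(Hm n))
          = (((n:ℝ) - 1) / (n:ℝ)) * ((1 / ρ ^ n) * ∫ y in sphere x ρ,
              (∑ i, Tρ y i * ((y i - x i) / ρ)) ∂(Hm n)) := by
        rw [setIntegral_congr_fun isClosed_sphere.measurableSet
          (fun y hy => sphere_val_X x hn0 hρ le_rfl Tρ (Metric.mem_sphere.mp hy))]
        rw [show (fun y => ((n:ℝ) - 1) / (n:ℝ) * (1 / ρ ^ n)
            * (∑ i, Tρ y i * ((y i - x i) / ρ)))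
          = fun y => ((n:ℝ) - 1) / (n:ℝ) * ((1 / ρ ^ n)
            * (∑ i, Tρ y i * ((y i - x i) / ρ))) from by funext y; ring]
        rw [integral_const_mul, integral_const_mul]
      have key := hMG
      rw [hL, hSτ, hSρ] at key
      rw [gBall, gBall, key]
      field_simp
      ring
    · simp only [if_neg hij, mul_zero, zero_div, integral_zero]
      ring
  · -- part 3 : sBall / Υ kernel
    intro k
    have hdivF : ∀ z ∈ ball x τ \ ball x ρ, ∀ a,
        ∑ c, pdsE c (fun y => FU x ρ k y a c) z = 0 := by
      intro z hz a
      have hq2 : ρ ^ 2 ≤ qF x z := hannq z hz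
      have hq0 : 0 < qF x z := lt_of_lt_of_le (by positivity) hq2
      have hc : ∀ c, pdsE c (fun y => FU x ρ k y a c) z
          = pdsE c (fun y => KU x k y a c) z := by
        intro c
        have := pdsE_cut_eq x hρ (fun y => KU x k y a c)
          (lt_of_lt_of_le (by nlinarith) hq2) c
        simpa [FU] using this
      rw [Finset.sum_congr rfl fun c _ => hc c]
      exact divKU x k hq0 a
    have hMG := master hu hσmeas hσbd hρ hρτ hTρ hTτ (FU x ρ k)
      (contDiff_FU x hρ k)
      (fun z => ⟨fun a c => FU_symm x ρ k z a c, FU_trace x ρ k z⟩) hdivF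
    have hL : (∫ z in ball x τ \ ball x ρ,
          (∑ a, ∑ c, FU x ρ k z a c * σ z a c) ∂ν)
        = ∫ y in ball x τ \ ball x ρ,
          (2 * (∑ l, σ y k l * (y l - x l)) / Real.sqrt (∑ l, (y l - x l) ^ 2)
            - ((n : ℝ) + 2) *
                ((∑ l, ∑ m, (y l - x l) * σ y l m * (y m - x m)) / (∑ l, (y l - x l) ^ 2))
                * ((y k - x k) / Real.sqrt (∑ l, (y l - x l) ^ 2))
            + (∑ l, σ y l l) * ((y k - x k) / Real.sqrt (∑ l, (y l - x l) ^ 2)))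
            / (Real.sqrt (∑ l, (y l - x l) ^ 2)) ^ (n + 1) ∂ν := by
      apply integral_congr_ae
      filter_upwards [ae_restrict_mem hann, ae_restrict_of_ae hσpolar] with y hy hσy
      exact ann_val_U x hρ k (hannq y hy) (σ y) hσy.1
    have hSτ : (∫ y in sphere x τ,
          (∑ a, ∑ c, edT n (fun l => (y l - x l) / τ) (fun l => Tτ y l) a c
            * FU x ρ k y a c) ∂(Hm n))
        = (1 / τ ^ (n + 1)) * ∫ y in sphere x τ,
            (Tτ y k - (n:ℝ) * (∑ i, (y i - x i) / τ * Tτ y i) * ((y k - x k) / τ))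
              ∂(Hm n) := by
      rw [setIntegral_congr_fun isClosed_sphere.measurableSet
        (fun y hy => sphere_val_U x hρ hρτ.le k Tτ (Metric.mem_sphere.mp hy))]
      exact integral_const_mul _ _
    have hSρ : (∫ y in sphere x ρ,
          (∑ a, ∑ c, edT n (fun l => (y l - x l) / ρ) (fun l => Tρ y l) a c
            * FU x ρ k y a c) ∂(Hm n))
        = (1 / ρ ^ (n + 1)) * ∫ y in sphere x ρ,
            (Tρ y k - (n:ℝ) * (∑ i, (y i - x i) / ρ * Tρ y i) * ((y k - x k) / ρ))
              ∂(Hm n) := by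
      rw [setIntegral_congr_fun isClosed_sphere.measurableSet
        (fun y hy => sphere_val_U x hρ le_rfl k Tρ (Metric.mem_sphere.mp hy))]
      exact integral_const_mul _ _
    have key := hMG
    rw [hL, hSτ, hSρ] at key
    rw [sBall, sBall, key]
    set A := ∫ y in sphere x ρ,
      (Tρ y k - (n:ℝ) * (∑ i, (y i - x i) / ρ * Tρ y i) * ((y k - x k) / ρ)) ∂(Hm n) with hA
    set B := ∫ y in sphere x τ,
      (Tτ y k - (n:ℝ) * (∑ i, (y i - x i) / τ * Tτ y i) * ((y k - x k) / τ)) ∂(Hm n) with hB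
    field_simp
    ring
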